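/- For natural numbers m ≥ 2 and n ≥ 1, the graph C_{m,n} has domination number 1, eternal domination number m + 1, and autonomous domination number m + n. -/

import Mathlib

open SimpleGraph

variable {V : Type*} [DecidableEq V]

/-- `S` is a dominating set of `G`. -/
def Dominates (G : SimpleGraph V) (S : Finset V) : Prop :=
  ∀ v : V, v ∈ S ∨ ∃ u ∈ S, G.Adj u v

/-- Dominating sets `S` and `S'` are adjacent: they differ by moving one
guard along an edge of `G`. -/
def AdjacentSets (G : SimpleGraph V) (S S' : Finset V) : Prop :=
  ∃ v v', v ∈ S ∧ v' ∉ S ∧ G.Adj v v' ∧ S' = insert v' (S.erase v)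

/-- `S` is a secure dominating set. -/
def SecureDominating (G : SimpleGraph V) (S : Finset V) : Prop :=
  Dominates G S ∧ ∀ v ∉ S, ∃ S', Dominates G S' ∧ AdjacentSets G S S' ∧ v ∈ S'

/-- An autonomously dominating family. -/
def AutFamily (G : SimpleGraph V) (F : Set (Finset V)) : Prop :=
  (∀ S ∈ F, Dominates G S) ∧
  (∀ S ∈ F, ∀ v ∉ S, ∃ S' ∈ F, AdjacentSets G S S' ∧ v ∈ S') ∧
  (∀ S ∈ F, ∀ S', Dominates G S' → AdjacentSets G S S' → S' ∈ F)

/-- An autonomously dominating set. -/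
def AutDomSet (G : SimpleGraph V) (S : Finset V) : Prop :=
  ∃ F, AutFamily G F ∧ S ∈ F

/-- The autonomous domination number. -/
noncomputable def autDomNum (G : SimpleGraph V) : ℕ :=
  sInf {k | ∃ S : Finset V, AutDomSet G S ∧ S.card = k}

/-- An eternally dominating family (no closure condition). -/
def EternalFamily (G : SimpleGraph V) (F : Set (Finset V)) : Prop :=
  (∀ S ∈ F, Dominates G S) ∧
  (∀ S ∈ F, ∀ v ∉ S, ∃ S' ∈ F, AdjacentSets G S S' ∧ v ∈ S')

/-- The eternal domination number. -/
noncomputable def eternalDomNum (G : SimpleGraph V) : ℕ :=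
  sInf {k | ∃ (F : Set (Finset V)) (S : Finset V),
    EternalFamily G F ∧ S ∈ F ∧ S.card = k}

/-- The domination number. -/
noncomputable def domNum (G : SimpleGraph V) : ℕ :=
  sInf {k | ∃ S : Finset V, Dominates G S ∧ S.card = k}

/-- The graph `C_{m,n}`: vertices `a_1, a_2` (`Sum.inl`), `b_1, …, b_m`
(`Sum.inr (Sum.inl _)`), `c_1, …, c_n` (`Sum.inr (Sum.inr _)`); each `a_i` is adjacent
to every other vertex, the `c`'s induce a complete subgraph, and there are no other
edges. -/
def graphC (m n : ℕ) : SimpleGraph (Fin 2 ⊕ Fin m ⊕ Fin n) :=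
  SimpleGraph.fromRel (fun x y => match x, y with
    | .inl _, _ => True
    | _, .inl _ => True
    | .inr (.inr _), .inr (.inr _) => True
    | _, _ => False)


namespace GraphCAux
open Finset

variable {m n : ℕ}

lemma adj_inl (i : Fin 2) (x : Fin 2 ⊕ Fin m ⊕ Fin n) (h : x ≠ .inl i) :
    (graphC m n).Adj (.inl i) x := by
  simp [graphC, fromRel_adj, Ne.symm h]

lemma adj_cc (i j : Fin n) (h : i ≠ j) :
    (graphC m n).Adj (.inr (.inr i)) (.inr (.inr j)) := by
  simpa [graphC, fromRel_adj] using h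

lemma adj_b (j : Fin m) (x : Fin 2 ⊕ Fin m ⊕ Fin n)
    (h : (graphC m n).Adj x (.inr (.inl j))) : ∃ i, x = .inl i := by
  rcases x with i | j' | k
  · exact ⟨i, rfl⟩
  · simp [graphC, fromRel_adj] at h
  · simp [graphC, fromRel_adj] at h

lemma adj_not_b {x y : Fin 2 ⊕ Fin m ⊕ Fin n} (hxy : x ≠ y)
    (hx : ∀ j, x ≠ .inr (.inl j)) (hy : ∀ j, y ≠ .inr (.inl j)) :
    (graphC m n).Adj x y := by
  rcases x with i | j | k
  · exact adj_inl i y (Ne.symm hxy)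
  · exact absurd rfl (hx j)
  · rcases y with i' | j' | k'
    · exact ((graphC m n).adj_symm (adj_inl i' _ hxy))
    · exact absurd rfl (hy j')
    · exact adj_cc _ _ (by rintro rfl; exact hxy rfl)

lemma card_adjSets {G : SimpleGraph (Fin 2 ⊕ Fin m ⊕ Fin n)} {S S' : Finset _}
    (h : AdjacentSets G S S') : S'.card = S.card := by
  obtain ⟨v, v', hv, hv', hadj, rfl⟩ := h
  rw [Finset.card_insert_of_notMem (fun hc => hv' (Finset.mem_of_mem_erase hc)),
    Finset.card_erase_of_mem hv]
  exact Nat.sub_add_cancel (Finset.card_pos.2 ⟨v, hv⟩)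

lemma dominates_of_inl (i : Fin 2) {S : Finset (Fin 2 ⊕ Fin m ⊕ Fin n)}
    (h : .inl i ∈ S) : Dominates (graphC m n) S := fun x => by
  by_cases hx : x = .inl i
  · exact Or.inl (hx ▸ h)
  · exact Or.inr ⟨_, h, adj_inl i x hx⟩

/-- The set of all `b` vertices. -/
def Bset (m n : ℕ) : Finset (Fin 2 ⊕ Fin m ⊕ Fin n) :=
  Finset.univ.image (fun j : Fin m => .inr (.inl j))

lemma mem_Bset {x : Fin 2 ⊕ Fin m ⊕ Fin n} : x ∈ Bset m n ↔ ∃ j, x = .inr (.inl j) := by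
  simp [Bset, eq_comm]

lemma card_Bset : (Bset m n).card = m := by
  rw [Bset, Finset.card_image_of_injective _ (fun a b h => by
    injection h with h'; injection h')]
  simp

lemma card_V : Fintype.card (Fin 2 ⊕ Fin m ⊕ Fin n) = 2 + (m + n) := by simp

/-- The eternal family: all b's plus one guard on a non-b vertex. -/
def Feternal (m n : ℕ) : Set (Finset (Fin 2 ⊕ Fin m ⊕ Fin n)) :=
  {S | ∃ x, (∀ j, x ≠ Sum.inr (Sum.inl j)) ∧ S = insert x (Bset m n)}

lemma Feternal_family (hn : 1 ≤ n) : EternalFamily (graphC m n) (Feternal m n) := by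
  constructor
  · rintro S ⟨x, hx, rfl⟩
    rcases x with i | j | k
    · exact dominates_of_inl i (Finset.mem_insert_self _ _)
    · exact absurd rfl (hx j)
    · intro v
      rcases v with i | j | k'
      · exact Or.inr ⟨_, Finset.mem_insert_self _ _,
          (graphC m n).adj_symm (adj_inl i _ (by simp))⟩
      · exact Or.inl (Finset.mem_insert_of_mem (mem_Bset.2 ⟨j, rfl⟩))
      · by_cases hk : k' = k
        · exact Or.inl (hk ▸ Finset.mem_insert_self _ _)
        · exact Or.inr ⟨_, Finset.mem_insert_self _ _, adj_cc _ _ (Ne.symm hk)⟩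
  · rintro S ⟨x, hx, rfl⟩ v hv
    have hvB : ∀ j, v ≠ Sum.inr (Sum.inl j) := by
      rintro j rfl
      exact hv (Finset.mem_insert_of_mem (mem_Bset.2 ⟨j, rfl⟩))
    have hxv : x ≠ v := by rintro rfl; exact hv (Finset.mem_insert_self _ _)
    have hxB : x ∉ Bset m n := by
      rw [mem_Bset]; rintro ⟨j, rfl⟩; exact hx j rfl
    refine ⟨insert v (Bset m n), ⟨v, hvB, rfl⟩, ⟨x, v, Finset.mem_insert_self _ _, hv,
      adj_not_b hxv hx hvB, ?_⟩, Finset.mem_insert_self _ _⟩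
    rw [Finset.erase_insert hxB]

lemma eternal_lower (hm : 2 ≤ m) (hn : 1 ≤ n) (F : Set (Finset (Fin 2 ⊕ Fin m ⊕ Fin n)))
    (hF : EternalFamily (graphC m n) F) (S : Finset _) (hS : S ∈ F) : m + 1 ≤ S.card := by
  obtain ⟨hdom, hmove⟩ := hF
  -- we can fill up all the b's
  have key : ∀ d (S : Finset (Fin 2 ⊕ Fin m ⊕ Fin n)), S ∈ F → (Bset m n \ S).card = d →
      ∃ T ∈ F, T.card = S.card ∧ Bset m n ⊆ T := by
    intro d
    induction d using Nat.strong_induction_on with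
    | _ d ih =>
      intro S hSF hcard
      by_cases hd : Bset m n ⊆ S
      · exact ⟨S, hSF, rfl, hd⟩
      · obtain ⟨bb, hbB, hbS⟩ := Finset.not_subset.1 hd
        obtain ⟨S', hS'F, hadj, hbS'⟩ := hmove S hSF bb hbS
        have hcardS' : S'.card = S.card := card_adjSets hadj
        obtain ⟨v, v', hv, hv', hvadj, rfl⟩ := hadj
        have hbv' : bb = v' := by
          rcases Finset.mem_insert.1 hbS' with h | h
          · exact h
          · exact absurd (Finset.mem_of_mem_erase h) hbS
        subst hbv'
        obtain ⟨j, hbj⟩ := mem_Bset.1 hbB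
        obtain ⟨i, hvi⟩ := adj_b j v (hbj ▸ hvadj)
        have hvB : v ∉ Bset m n := by
          rw [mem_Bset, hvi]; rintro ⟨j', h⟩; exact absurd h (by simp)
        have hsub : Bset m n \ insert bb (S.erase v) ⊆ (Bset m n \ S).erase bb := by
          intro x hx
          rw [Finset.mem_sdiff] at hx
          rw [Finset.mem_erase, Finset.mem_sdiff]
          have hxb : x ≠ bb := fun h => hx.2 (h ▸ Finset.mem_insert_self _ _)
          refine ⟨hxb, hx.1, fun hxS => hx.2 (Finset.mem_insert_of_mem
            (Finset.mem_erase.2 ⟨fun h => hvB (h ▸ hx.1), hxS⟩))⟩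
        have hlt : (Bset m n \ insert bb (S.erase v)).card < d := by
          have h1 : ((Bset m n \ S).erase bb).card < d := by
            rw [Finset.card_erase_of_mem (Finset.mem_sdiff.2 ⟨hbB, hbS⟩), hcard]
            have : 0 < d := hcard ▸ Finset.card_pos.2 ⟨bb, Finset.mem_sdiff.2 ⟨hbB, hbS⟩⟩
            omega
          exact lt_of_le_of_lt (Finset.card_le_card hsub) h1
        obtain ⟨T, hT1, hT2, hT3⟩ := ih _ hlt _ hS'F rfl
        exact ⟨T, hT1, by rw [hT2, hcardS'], hT3⟩
  obtain ⟨T, hTF, hTcard, hBT⟩ := key _ S hS rfl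
  by_contra hcon
  push_neg at hcon
  have hTB : Bset m n = T := by
    refine Finset.eq_of_subset_of_card_le hBT ?_
    rw [hTcard, card_Bset]; omega
  have hc0 : (Sum.inr (Sum.inr ⟨0, hn⟩) : Fin 2 ⊕ Fin m ⊕ Fin n) ∉ T := by
    rw [← hTB, mem_Bset]; rintro ⟨j, h⟩; exact absurd h (by simp)
  obtain ⟨S', hS'F, ⟨v, v', hv, hv', hvadj, rfl⟩, hc0'⟩ := hmove T hTF _ hc0
  have hcv' : (Sum.inr (Sum.inr ⟨0, hn⟩) : Fin 2 ⊕ Fin m ⊕ Fin n) = v' := by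
    rcases Finset.mem_insert.1 hc0' with h | h
    · exact h
    · exact absurd (Finset.mem_of_mem_erase h) hc0
  obtain ⟨j, hvj⟩ := mem_Bset.1 (hTB ▸ hv)
  obtain ⟨i, hvi⟩ := adj_b j v' (by
    rw [hvj] at hvadj
    exact (graphC m n).adj_symm hvadj)
  rw [← hcv'] at hvi
  exact absurd hvi (by simp)

lemma dominates_insert_inr {S' : Finset (Fin 2 ⊕ Fin m ⊕ Fin n)} (y : Fin m ⊕ Fin n)
    (hvS' : Sum.inr y ∈ S') (h : ∀ z : Fin m ⊕ Fin n, Sum.inr z ∈ S' ∨ z = y) :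
    Dominates (graphC m n) S' := by
  intro x
  rcases x with i | z
  · exact Or.inr ⟨_, hvS', (graphC m n).adj_symm (adj_inl i _ (by simp))⟩
  · rcases h z with hz | rfl
    · exact Or.inl hz
    · exact Or.inl hvS'

/-- The autonomous family: all dominating sets of size `m + n`. -/
def Faut (m n : ℕ) : Set (Finset (Fin 2 ⊕ Fin m ⊕ Fin n)) :=
  {S | Dominates (graphC m n) S ∧ S.card = m + n}

lemma Faut_family (hm : 2 ≤ m) (hn : 1 ≤ n) : AutFamily (graphC m n) (Faut m n) := by
  refine ⟨fun S hS => hS.1, ?_, fun S hS S' hd hadj => ⟨hd, by rw [card_adjSets hadj, hS.2]⟩⟩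
  rintro S ⟨hdom, hcard⟩ v hv
  have hcompl : Sᶜ.card = 2 := by
    rw [Finset.card_compl, hcard, card_V]; omega
  rcases v with i | y
  · -- attack on an a-vertex: move any guard there
    obtain ⟨u, hu⟩ : S.Nonempty := Finset.card_pos.1 (by omega)
    have huv : u ≠ Sum.inl i := fun h => hv (h ▸ hu)
    refine ⟨insert (Sum.inl i) (S.erase u), ⟨dominates_of_inl i (Finset.mem_insert_self _ _),
      by rw [card_adjSets ⟨u, _, hu, hv, (graphC m n).adj_symm (adj_inl i u huv), rfl⟩, hcard]⟩,
      ⟨u, _, hu, hv, (graphC m n).adj_symm (adj_inl i u huv), rfl⟩, Finset.mem_insert_self _ _⟩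
  · -- attack on a b- or c-vertex
    by_cases h0 : Sum.inl 0 ∈ S
    · by_cases h1 : Sum.inl 1 ∈ S
      · -- both a's present: move a_0 to v
        have hadj : (graphC m n).Adj (Sum.inl 0) (Sum.inr y) := adj_inl 0 _ (by simp)
        refine ⟨insert (Sum.inr y) (S.erase (Sum.inl 0)),
          ⟨dominates_of_inl 1 (Finset.mem_insert_of_mem (Finset.mem_erase.2 ⟨by simp, h1⟩)),
          by rw [card_adjSets ⟨_, _, h0, hv, hadj, rfl⟩, hcard]⟩,
          ⟨_, _, h0, hv, hadj, rfl⟩, Finset.mem_insert_self _ _⟩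
      · -- a_1 missing: complement is exactly {v, a_1}; move a_0 to v
        have hceq : Sᶜ = {Sum.inr y, Sum.inl 1} := by
          refine (Finset.eq_of_subset_of_card_le ?_ ?_).symm
          · intro x hx
            rcases Finset.mem_insert.1 hx with rfl | hx
            · exact Finset.mem_compl.2 hv
            · rw [Finset.mem_singleton.1 hx]; exact Finset.mem_compl.2 h1
          · rw [hcompl, Finset.card_insert_of_notMem (by simp), Finset.card_singleton]
        have hadj : (graphC m n).Adj (Sum.inl 0) (Sum.inr y) := adj_inl 0 _ (by simp)
        have hdom' : Dominates (graphC m n) (insert (Sum.inr y) (S.erase (Sum.inl 0))) := by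
          refine dominates_insert_inr y (Finset.mem_insert_self _ _) (fun z => ?_)
          by_cases hz : z = y
          · exact Or.inr hz
          · refine Or.inl (Finset.mem_insert_of_mem (Finset.mem_erase.2 ⟨by simp, ?_⟩))
            by_contra hzS
            have : (Sum.inr z : Fin 2 ⊕ Fin m ⊕ Fin n) ∈ Sᶜ := Finset.mem_compl.2 hzS
            rw [hceq] at this
            rcases Finset.mem_insert.1 this with h | h
            · exact hz (by injection h)
            · exact absurd (Finset.mem_singleton.1 h) (by simp)
        exact ⟨insert (Sum.inr y) (S.erase (Sum.inl 0)),
          ⟨hdom', by rw [card_adjSets ⟨_, _, h0, hv, hadj, rfl⟩, hcard]⟩,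
          ⟨_, _, h0, hv, hadj, rfl⟩, Finset.mem_insert_self _ _⟩
    · -- a_0 missing: complement is exactly {v, a_0}; so a_1 ∈ S; move a_1 to v
      have hceq : Sᶜ = {Sum.inr y, Sum.inl 0} := by
        refine (Finset.eq_of_subset_of_card_le ?_ ?_).symm
        · intro x hx
          rcases Finset.mem_insert.1 hx with rfl | hx
          · exact Finset.mem_compl.2 hv
          · rw [Finset.mem_singleton.1 hx]; exact Finset.mem_compl.2 h0
        · rw [hcompl, Finset.card_insert_of_notMem (by simp), Finset.card_singleton]
      have h1 : Sum.inl 1 ∈ S := by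
        by_contra h1
        have : (Sum.inl 1 : Fin 2 ⊕ Fin m ⊕ Fin n) ∈ Sᶜ := Finset.mem_compl.2 h1
        rw [hceq] at this
        rcases Finset.mem_insert.1 this with h | h
        · exact absurd h (by simp)
        · exact absurd (Finset.mem_singleton.1 h) (by simp)
      have hadj : (graphC m n).Adj (Sum.inl 1) (Sum.inr y) := adj_inl 1 _ (by simp)
      have hdom' : Dominates (graphC m n) (insert (Sum.inr y) (S.erase (Sum.inl 1))) := by
        refine dominates_insert_inr y (Finset.mem_insert_self _ _) (fun z => ?_)
        by_cases hz : z = y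
        · exact Or.inr hz
        · refine Or.inl (Finset.mem_insert_of_mem (Finset.mem_erase.2 ⟨by simp, ?_⟩))
          by_contra hzS
          have : (Sum.inr z : Fin 2 ⊕ Fin m ⊕ Fin n) ∈ Sᶜ := Finset.mem_compl.2 hzS
          rw [hceq] at this
          rcases Finset.mem_insert.1 this with h | h
          · exact hz (by injection h)
          · exact absurd (Finset.mem_singleton.1 h) (by simp)
      exact ⟨insert (Sum.inr y) (S.erase (Sum.inl 1)),
        ⟨hdom', by rw [card_adjSets ⟨_, _, h1, hv, hadj, rfl⟩, hcard]⟩,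
        ⟨_, _, h1, hv, hadj, rfl⟩, Finset.mem_insert_self _ _⟩

lemma Faut_mem (hm : 2 ≤ m) (hn : 1 ≤ n) :
    ∃ S : Finset (Fin 2 ⊕ Fin m ⊕ Fin n), S ∈ Faut m n := by
  refine ⟨Finset.univ \ {Sum.inr (Sum.inl ⟨0, by omega⟩), Sum.inr (Sum.inl ⟨1, by omega⟩)},
    dominates_of_inl 0 (by simp), ?_⟩
  rw [Finset.card_sdiff_of_subset (Finset.subset_univ _), Finset.card_univ, card_V,
    Finset.card_insert_of_notMem (by simp), Finset.card_singleton]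
  omega

lemma aut_lower (hm : 2 ≤ m) (hn : 1 ≤ n) (F : Set (Finset (Fin 2 ⊕ Fin m ⊕ Fin n)))
    (hF : AutFamily (graphC m n) F) (S : Finset _) (hS : S ∈ F) : m + n ≤ S.card := by
  obtain ⟨hdom, hmove, hclose⟩ := hF
  by_contra hcon
  push_neg at hcon
  set k := S.card with hk
  have hne : S.Nonempty := by
    rcases hdom S hS (Sum.inl 0) with h | ⟨u, hu, _⟩
    exacts [⟨_, h⟩, ⟨u, hu⟩]
  have hkpos : 1 ≤ k := Finset.card_pos.2 hne
  set b0v : Fin 2 ⊕ Fin m ⊕ Fin n := Sum.inr (Sum.inl ⟨0, by omega⟩) with hb0def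
  set b1v : Fin 2 ⊕ Fin m ⊕ Fin n := Sum.inr (Sum.inl ⟨1, by omega⟩) with hb1def
  set W : Finset (Fin 2 ⊕ Fin m ⊕ Fin n) :=
    Finset.univ \ {Sum.inl 0, Sum.inl 1, b0v, b1v} with hWdef
  have h4 : ({Sum.inl 0, Sum.inl 1, b0v, b1v} : Finset (Fin 2 ⊕ Fin m ⊕ Fin n)).card = 4 := by
    have e1 : (Sum.inl 0 : Fin 2 ⊕ Fin m ⊕ Fin n) ∉
        ({Sum.inl 1, b0v, b1v} : Finset (Fin 2 ⊕ Fin m ⊕ Fin n)) := by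
      simp [hb0def, hb1def]
    have e2 : (Sum.inl 1 : Fin 2 ⊕ Fin m ⊕ Fin n) ∉
        ({b0v, b1v} : Finset (Fin 2 ⊕ Fin m ⊕ Fin n)) := by
      simp [hb0def, hb1def]
    have e3 : b0v ∉ ({b1v} : Finset (Fin 2 ⊕ Fin m ⊕ Fin n)) := by
      simp [hb0def, hb1def]
    rw [Finset.card_insert_of_notMem e1, Finset.card_insert_of_notMem e2,
      Finset.card_insert_of_notMem e3, Finset.card_singleton]
  have hcardW : W.card = 2 + (m + n) - 4 := by
    rw [hWdef, Finset.card_sdiff_of_subset (Finset.subset_univ _), Finset.card_univ, card_V, h4]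
  obtain ⟨T, hTW, hTcard⟩ := Finset.exists_subset_card_eq (s := W) (n := k - 1) (by omega)
  have hnotT : ∀ x ∈ ({Sum.inl 0, Sum.inl 1, b0v, b1v} :
      Finset (Fin 2 ⊕ Fin m ⊕ Fin n)), x ∉ T := by
    intro x hx hxT
    exact (Finset.mem_sdiff.1 (hTW hxT)).2 hx
  have hT0 : (Sum.inl 0 : Fin 2 ⊕ Fin m ⊕ Fin n) ∉ T := hnotT _ (by simp)
  set Sstar : Finset (Fin 2 ⊕ Fin m ⊕ Fin n) := insert (Sum.inl 0) T with hSstardef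
  have hstar0 : (Sum.inl 0 : Fin 2 ⊕ Fin m ⊕ Fin n) ∈ Sstar := Finset.mem_insert_self _ _
  have hstar1 : (Sum.inl 1 : Fin 2 ⊕ Fin m ⊕ Fin n) ∉ Sstar := by
    rw [hSstardef, Finset.mem_insert]
    rintro (h | h)
    · exact absurd h (by simp)
    · exact hnotT _ (by simp) h
  have hstarb0 : b0v ∉ Sstar := by
    rw [hSstardef, Finset.mem_insert]
    rintro (h | h)
    · exact absurd h (by simp [hb0def])
    · exact hnotT _ (by simp) h
  have hstarb1 : b1v ∉ Sstar := by
    rw [hSstardef, Finset.mem_insert]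
    rintro (h | h)
    · exact absurd h (by simp [hb1def])
    · exact hnotT _ (by simp) h
  have hSsize : Sstar.card = k := by
    rw [hSstardef, Finset.card_insert_of_notMem hT0, hTcard]; omega
  -- the movement lemma: from any family member containing a_0 we can reach Sstar
  have reach : ∀ M (S' : Finset (Fin 2 ⊕ Fin m ⊕ Fin n)), S' ∈ F → Sum.inl 0 ∈ S' →
      S'.card = k → 2 * (S' \ Sstar).card + (if Sum.inl 1 ∈ S' then 0 else 1) ≤ M →
      Sstar ∈ F := by
    intro M
    induction M using Nat.strong_induction_on with
    | _ M ih =>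
      intro S' hS'F h0 hcard hM
      by_cases heq : S' = Sstar
      · exact heq ▸ hS'F
      have hd : 0 < (S' \ Sstar).card := by
        rcases Nat.eq_zero_or_pos (S' \ Sstar).card with h | h
        · exact absurd (Finset.eq_of_subset_of_card_le
            (Finset.sdiff_eq_empty_iff_subset.1 (Finset.card_eq_zero.1 h))
            (by rw [hSsize, hcard])) heq
        · exact h
      have hd2 : 0 < (Sstar \ S').card := by
        rwa [Finset.card_sdiff_comm (by rw [hcard, hSsize])] at hd
      obtain ⟨v, hv⟩ := Finset.card_pos.1 hd2
      rw [Finset.mem_sdiff] at hv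
      by_cases h1 : Sum.inl 1 ∈ S'
      · -- move the guard from a_1 to v
        have hu : Sum.inl 1 ∈ S' \ Sstar := Finset.mem_sdiff.2 ⟨h1, hstar1⟩
        have hne1 : (Sum.inl 1 : Fin 2 ⊕ Fin m ⊕ Fin n) ≠ v := fun h => hstar1 (h ▸ hv.1)
        have hadj : (graphC m n).Adj (Sum.inl 1) v := adj_inl 1 v (Ne.symm hne1)
        have hAS : AdjacentSets (graphC m n) S' (insert v (S'.erase (Sum.inl 1))) :=
          ⟨_, _, h1, hv.2, hadj, rfl⟩
        have hS''F : insert v (S'.erase (Sum.inl 1)) ∈ F :=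
          hclose S' hS'F _ (dominates_of_inl 0 (Finset.mem_insert_of_mem
            (Finset.mem_erase.2 ⟨by simp, h0⟩))) hAS
        have hdiff : insert v (S'.erase (Sum.inl 1)) \ Sstar = (S' \ Sstar).erase (Sum.inl 1) := by
          ext x
          simp only [Finset.mem_sdiff, Finset.mem_insert, Finset.mem_erase]
          constructor
          · rintro ⟨rfl | ⟨hne, hx⟩, hns⟩
            · exact absurd hv.1 hns
            · exact ⟨hne, hx, hns⟩
          · rintro ⟨hne, hx, hns⟩
            exact ⟨Or.inr ⟨hne, hx⟩, hns⟩
        have hcd : (insert v (S'.erase (Sum.inl 1)) \ Sstar).card = (S' \ Sstar).card - 1 := by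
          rw [hdiff, Finset.card_erase_of_mem hu]
        refine ih (M - 1) (by rw [if_pos h1] at hM; omega) _ hS''F
          (Finset.mem_insert_of_mem (Finset.mem_erase.2 ⟨by simp, h0⟩))
          (by rw [card_adjSets hAS, hcard]) ?_
        have hle : (if Sum.inl 1 ∈ insert v (S'.erase (Sum.inl 1)) then 0 else 1) ≤ 1 := by
          split <;> omega
        rw [if_pos h1] at hM
        omega
      · -- a_1 unoccupied
        obtain ⟨u, hu⟩ := Finset.card_pos.1 hd
        rw [Finset.mem_sdiff] at hu
        have hune : u ≠ v := fun h => hv.2 (h ▸ hu.1)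
        have hu0 : u ≠ Sum.inl 0 := fun h => hu.2 (h ▸ hstar0)
        have hu1 : u ≠ Sum.inl 1 := fun h => h1 (h ▸ hu.1)
        by_cases hadj : (graphC m n).Adj u v
        · -- direct move u → v
          have hAS : AdjacentSets (graphC m n) S' (insert v (S'.erase u)) :=
            ⟨_, _, hu.1, hv.2, hadj, rfl⟩
          have hS''F : insert v (S'.erase u) ∈ F :=
            hclose S' hS'F _ (dominates_of_inl 0 (Finset.mem_insert_of_mem
              (Finset.mem_erase.2 ⟨Ne.symm hu0, h0⟩))) hAS
          have hdiff : insert v (S'.erase u) \ Sstar = (S' \ Sstar).erase u := by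
            ext x
            simp only [Finset.mem_sdiff, Finset.mem_insert, Finset.mem_erase]
            constructor
            · rintro ⟨rfl | ⟨hne, hx⟩, hns⟩
              · exact absurd hv.1 hns
              · exact ⟨hne, hx, hns⟩
            · rintro ⟨hne, hx, hns⟩
              exact ⟨Or.inr ⟨hne, hx⟩, hns⟩
          have hcd : (insert v (S'.erase u) \ Sstar).card = (S' \ Sstar).card - 1 := by
            rw [hdiff, Finset.card_erase_of_mem (Finset.mem_sdiff.2 hu)]
          refine ih (M - 1) (by rw [if_neg h1] at hM; omega) _ hS''F
            (Finset.mem_insert_of_mem (Finset.mem_erase.2 ⟨Ne.symm hu0, h0⟩))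
            (by rw [card_adjSets hAS, hcard]) ?_
          have hle : (if Sum.inl 1 ∈ insert v (S'.erase u) then 0 else 1) ≤ 1 := by
            split <;> omega
          rw [if_neg h1] at hM
          omega
        · -- route the guard through a_1
          have hadj2 : (graphC m n).Adj u (Sum.inl 1) :=
            (graphC m n).adj_symm (adj_inl 1 u hu1)
          have hAS : AdjacentSets (graphC m n) S' (insert (Sum.inl 1) (S'.erase u)) :=
            ⟨_, _, hu.1, h1, hadj2, rfl⟩
          have hS''F : insert (Sum.inl 1) (S'.erase u) ∈ F :=
            hclose S' hS'F _ (dominates_of_inl 0 (Finset.mem_insert_of_mem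
              (Finset.mem_erase.2 ⟨Ne.symm hu0, h0⟩))) hAS
          have hdiff : insert (Sum.inl 1) (S'.erase u) \ Sstar =
              insert (Sum.inl 1) ((S' \ Sstar).erase u) := by
            ext x
            simp only [Finset.mem_sdiff, Finset.mem_insert, Finset.mem_erase]
            constructor
            · rintro ⟨rfl | ⟨hne, hx⟩, hns⟩
              · exact Or.inl rfl
              · exact Or.inr ⟨hne, hx, hns⟩
            · rintro (rfl | ⟨hne, hx, hns⟩)
              · exact ⟨Or.inl rfl, hstar1⟩
              · exact ⟨Or.inr ⟨hne, hx⟩, hns⟩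
          have hcd : (insert (Sum.inl 1) (S'.erase u) \ Sstar).card = (S' \ Sstar).card := by
            rw [hdiff, Finset.card_insert_of_notMem
              (fun h => h1 (Finset.mem_sdiff.1 (Finset.mem_of_mem_erase h)).1),
              Finset.card_erase_of_mem (Finset.mem_sdiff.2 hu)]
            omega
          refine ih (M - 1) (by rw [if_neg h1] at hM; omega) _ hS''F
            (Finset.mem_insert_of_mem (Finset.mem_erase.2 ⟨Ne.symm hu0, h0⟩))
            (by rw [card_adjSets hAS, hcard]) ?_
          rw [if_neg h1] at hM
          rw [hcd, if_pos (Finset.mem_insert_self _ _)]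
          omega
  -- get a family member containing a_0
  obtain ⟨S1, hS1F, hS10, hS1c⟩ : ∃ S1 ∈ F, Sum.inl 0 ∈ S1 ∧ S1.card = k := by
    by_cases h0 : Sum.inl 0 ∈ S
    · exact ⟨S, hS, h0, rfl⟩
    · obtain ⟨u, hu⟩ := hne
      have hu0 : u ≠ Sum.inl 0 := fun h => h0 (h ▸ hu)
      have hAS : AdjacentSets (graphC m n) S (insert (Sum.inl 0) (S.erase u)) :=
        ⟨u, _, hu, h0, (graphC m n).adj_symm (adj_inl 0 u hu0), rfl⟩
      exact ⟨_, hclose S hS _ (dominates_of_inl 0 (Finset.mem_insert_self _ _)) hAS,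
        Finset.mem_insert_self _ _, card_adjSets hAS⟩
  have hstarF : Sstar ∈ F := by
    refine reach (2 * k + 1) S1 hS1F hS10 hS1c ?_
    have h1 : (S1 \ Sstar).card ≤ k :=
      le_trans (Finset.card_le_card Finset.sdiff_subset) (le_of_eq hS1c)
    have h2 : (if Sum.inl 1 ∈ S1 then 0 else 1) ≤ 1 := by split <;> omega
    omega
  -- the final unanswerable attack on b_0
  obtain ⟨S', hS'F, ⟨v, v', hv, hv', hvadj, rfl⟩, hb0'⟩ := hmove Sstar hstarF b0v hstarb0
  have hbv' : b0v = v' := by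
    rcases Finset.mem_insert.1 hb0' with h | h
    · exact h
    · exact absurd (Finset.mem_of_mem_erase h) hstarb0
  subst hbv'
  obtain ⟨i, hvi⟩ := adj_b _ v (by rw [hb0def] at hvadj; exact hvadj)
  have hv0 : v = Sum.inl 0 := by
    subst hvi
    fin_cases i
    · rfl
    · exact absurd hv hstar1
  subst hv0
  -- now b_1 is undominated in S'
  rcases hdom _ hS'F b1v with hin | ⟨u, hu, hadj⟩
  · rcases Finset.mem_insert.1 hin with h | h
    · exact absurd h (by simp [hb0def, hb1def])
    · exact hstarb1 (Finset.mem_of_mem_erase h)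
  · obtain ⟨i, hui⟩ := adj_b _ u (by rw [hb1def] at hadj; exact hadj)
    subst hui
    rcases Finset.mem_insert.1 hu with h | h
    · exact absurd h (by simp [hb0def])
    · rw [Finset.mem_erase] at h
      fin_cases i
      · exact h.1 rfl
      · exact hstar1 h.2

end GraphCAux


/-- for `m ≥ 2` and `n ≥ 1`, `γ(C_{m,n}) = 1`, `γ_∞(C_{m,n}) = m + 1`
and `γ_aut(C_{m,n}) = m + n`. -/
theorem graphC_parameters (m n : ℕ) (hm : 2 ≤ m) (hn : 1 ≤ n) :
    domNum (graphC m n) = 1 ∧ eternalDomNum (graphC m n) = m + 1 ∧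
    autDomNum (graphC m n) = m + n := by
  refine ⟨?_, ?_, ?_⟩
  · -- domination number
    have hmem : (1 : ℕ) ∈ {k | ∃ S : Finset (Fin 2 ⊕ Fin m ⊕ Fin n),
        Dominates (graphC m n) S ∧ S.card = k} :=
      ⟨{Sum.inl 0}, GraphCAux.dominates_of_inl 0 (Finset.mem_singleton_self _),
        Finset.card_singleton _⟩
    refine le_antisymm (Nat.sInf_le hmem) ?_
    obtain ⟨S, hd, hc⟩ := Nat.sInf_mem (⟨1, hmem⟩ : Set.Nonempty _)
    rw [domNum, ← hc]
    rw [Nat.one_le_iff_ne_zero, ← Nat.pos_iff_ne_zero, Finset.card_pos]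
    rcases hd (Sum.inl 0) with h | ⟨u, hu, _⟩
    exacts [⟨_, h⟩, ⟨u, hu⟩]
  · -- eternal domination number
    have hmem : (m + 1 : ℕ) ∈ {k | ∃ (F : Set (Finset (Fin 2 ⊕ Fin m ⊕ Fin n)))
        (S : Finset (Fin 2 ⊕ Fin m ⊕ Fin n)),
        EternalFamily (graphC m n) F ∧ S ∈ F ∧ S.card = k} := by
      refine ⟨GraphCAux.Feternal m n, insert (Sum.inl 0) (GraphCAux.Bset m n),
        GraphCAux.Feternal_family hn, ⟨Sum.inl 0, by simp, rfl⟩, ?_⟩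
      rw [Finset.card_insert_of_notMem (by rw [GraphCAux.mem_Bset]; simp),
        GraphCAux.card_Bset]
    refine le_antisymm (Nat.sInf_le hmem) ?_
    obtain ⟨F, S, hF, hS, hc⟩ := Nat.sInf_mem (⟨m + 1, hmem⟩ : Set.Nonempty _)
    rw [eternalDomNum, ← hc]
    exact GraphCAux.eternal_lower hm hn F hF S hS
  · -- autonomous domination number
    obtain ⟨S0, hS0⟩ := GraphCAux.Faut_mem (m := m) (n := n) hm hn
    have hmem : (m + n : ℕ) ∈ {k | ∃ S : Finset (Fin 2 ⊕ Fin m ⊕ Fin n),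
        AutDomSet (graphC m n) S ∧ S.card = k} :=
      ⟨S0, ⟨GraphCAux.Faut m n, GraphCAux.Faut_family hm hn, hS0⟩, hS0.2⟩
    refine le_antisymm (Nat.sInf_le hmem) ?_
    obtain ⟨S, ⟨F, hF, hSF⟩, hc⟩ := Nat.sInf_mem (⟨m + n, hmem⟩ : Set.Nonempty _)
    rw [autDomNum, ← hc]
    exact GraphCAux.aut_lower hm hn F hF S hSF
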